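/- Let A be an abelian group such that the n-torsion subgroup A[n] is finite for every positive integer n. Then A_Div = A_div, i.e., the maximal divisible subgroup coincides with the subgroup of divisible elements. -/

import Mathlib

/-- The subgroup `nA` of an abelian group `A`. -/
def nSub (A : Type*) [AddCommGroup A] (n : ℕ) : AddSubgroup A :=
  (n • AddMonoidHom.id A).range

/-- The maximal divisible subgroup `A_Div`: the image of the natural map
`Hom(ℚ, A) → Hom(ℤ, A) = A`, i.e. the set of values `φ 1` for `φ : ℚ →+ A`. -/
def maxDivSub (A : Type*) [AddCommGroup A] : AddSubgroup A where
  carrier := {a | ∃ φ : ℚ →+ A, φ 1 = a}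
  zero_mem' := ⟨0, rfl⟩
  add_mem' := by rintro a b ⟨φ, rfl⟩ ⟨ψ, rfl⟩; exact ⟨φ + ψ, rfl⟩
  neg_mem' := by rintro a ⟨φ, rfl⟩; exact ⟨-φ, rfl⟩

/-- The subgroup of divisible elements `A_div := ⋂_{n > 0} nA`. -/
def divElemSub (A : Type*) [AddCommGroup A] : AddSubgroup A :=
  ⨅ (n : ℕ) (_ : 0 < n), nSub A n

open CategoryTheory in
/-- Using the compactness of inverse limits of finite nonempty sets (Kőnig's lemma),
produce a compatible system of divisions of `a` by factorials. -/
theorem exists_div_seq {A : Type*} [AddCommGroup A]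
    (hfin : ∀ n : ℕ, 0 < n → Finite {a : A // n • a = 0}) (a : A)
    (ha : ∀ n : ℕ, 0 < n → ∃ b : A, n • b = a) :
    ∃ c : ℕ → A, (∀ k, k.factorial • c k = a) ∧ ∀ k, (k + 1) • c (k + 1) = c k := by
  let X : ℕ → Type _ := fun k => {b : A // k.factorial • b = a}
  have hne : ∀ k, Nonempty (X k) := fun k => by
    obtain ⟨b, hb⟩ := ha k.factorial k.factorial_pos
    exact ⟨⟨b, hb⟩⟩
  have hfi : ∀ k, Finite (X k) := by
    intro k
    obtain ⟨⟨b0, hb0⟩⟩ := hne k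
    have := hfin k.factorial k.factorial_pos
    refine Finite.of_injective (fun b : X k => (⟨b.1 - b0, ?_⟩ : {x : A // k.factorial • x = 0}))
      ?_
    · rw [smul_sub, b.2, hb0, sub_self]
    · intro b b' h
      simp only [Subtype.mk.injEq, sub_left_inj] at h
      exact Subtype.ext h
  let f : ∀ k, X (k + 1) → X k := fun k b =>
    ⟨(k + 1) • b.1, by rw [smul_smul, mul_comm, ← Nat.factorial_succ, b.2]⟩
  let F : ℕᵒᵖ ⥤ Type _ := Functor.ofOpSequence (C := Type _) (fun k => (TypeCat.ofHom (f k) : X (k+1) ⟶ X k))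
  have hFfin : ∀ j : ℕᵒᵖ, Finite (F.obj j) := fun j => hfi j.unop
  have hFne : ∀ j : ℕᵒᵖ, Nonempty (F.obj j) := fun j => hne j.unop
  obtain ⟨u, hu⟩ := nonempty_sections_of_finite_inverse_system F
  refine ⟨fun k => (u (Opposite.op k)).1, fun k => (u (Opposite.op k)).2, fun k => ?_⟩
  have h := hu (j := Opposite.op (k + 1)) (j' := Opposite.op k)
    (homOfLE (Nat.le_add_right k 1)).op
  rw [Functor.ofOpSequence_map_homOfLE_succ] at h
  exact congrArg Subtype.val h

/-- Coherence of the values `(p * (k! / d)) • c k` as `k` grows. -/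
theorem div_seq_coherence {A : Type*} [AddCommGroup A] (c : ℕ → A)
    (hc : ∀ k, (k + 1) • c (k + 1) = c k) (d : ℕ) (p : ℤ) :
    ∀ {k m : ℕ}, k ≤ m → (d : ℤ) ∣ (k.factorial : ℤ) →
      (p * ((k.factorial : ℤ) / d)) • c k = (p * ((m.factorial : ℤ) / d)) • c m := by
  intro k m hkm hd
  induction m with
  | zero => interval_cases k; rfl
  | succ m ih =>
    rcases Nat.lt_or_ge k (m + 1) with h | h
    · have hkm' : k ≤ m := Nat.lt_succ_iff.mp h
      have hdm : (d : ℤ) ∣ (m.factorial : ℤ) :=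
        hd.trans (Int.natCast_dvd_natCast.mpr (Nat.factorial_dvd_factorial hkm'))
      rw [ih hkm', ← hc m, ← natCast_zsmul, smul_smul]
      congr 1
      push_cast [Nat.factorial_succ]
      rw [Int.mul_ediv_assoc _ hdm]
      ring
    · have : k = m + 1 := le_antisymm hkm h
      subst this; rfl

/-- The integer identity expressing additivity of `q ↦ q.num * (m! / q.den)`. -/
theorem key_int (x y : ℚ) (m : ℕ) (hx : (x.den : ℤ) ∣ (m.factorial : ℤ))
    (hy : (y.den : ℤ) ∣ (m.factorial : ℤ)) (hxy : ((x + y).den : ℤ) ∣ (m.factorial : ℤ)) :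
    (x + y).num * ((m.factorial : ℤ) / (x + y).den) =
      x.num * ((m.factorial : ℤ) / x.den) + y.num * ((m.factorial : ℤ) / y.den) := by
  have cast_eq : ∀ z : ℚ, (z.den : ℤ) ∣ (m.factorial : ℤ) →
      ((z.num * ((m.factorial : ℤ) / z.den) : ℤ) : ℚ) = (m.factorial : ℚ) * z := by
    intro z hz
    have hden : ((z.den : ℤ) : ℚ) ≠ 0 := by exact_mod_cast z.den_ne_zero
    push_cast [Int.cast_div_charZero hz]
    conv_rhs => rw [← Rat.num_div_den z]
    field_simp
  apply Int.cast_injective (α := ℚ)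
  push_cast [cast_eq _ hx, cast_eq _ hy, cast_eq _ hxy]
  ring

/-- From a compatible system of divisions of `a0` by factorials, build `φ : ℚ →+ A`
with `φ 1 = a0`. -/
theorem exists_hom_of_div_seq {A : Type*} [AddCommGroup A] {a0 : A}
    (c : ℕ → A) (hca : ∀ k, k.factorial • c k = a0)
    (hc : ∀ k, (k + 1) • c (k + 1) = c k) :
    ∃ φ : ℚ →+ A, φ 1 = a0 := by
  have dvdden : ∀ (z : ℚ) (m : ℕ), z.den ≤ m → (z.den : ℤ) ∣ (m.factorial : ℤ) := fun z m hm =>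
    Int.natCast_dvd_natCast.mpr (Nat.dvd_factorial z.pos hm)
  refine ⟨{ toFun := fun q => (q.num * ((q.den.factorial : ℤ) / q.den)) • c q.den
            map_zero' := by simp
            map_add' := ?_ }, ?_⟩
  · intro x y
    set m := x.den + y.den + (x + y).den with hm
    have hxm : x.den ≤ m := by omega
    have hym : y.den ≤ m := by omega
    have hxym : (x + y).den ≤ m := by omega
    rw [div_seq_coherence c hc (x + y).den (x + y).num hxym (dvdden _ _ le_rfl),
        div_seq_coherence c hc x.den x.num hxm (dvdden _ _ le_rfl),
        div_seq_coherence c hc y.den y.num hym (dvdden _ _ le_rfl),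
        key_int x y m (dvdden _ _ hxm) (dvdden _ _ hym) (dvdden _ _ hxym), add_smul]
  · show ((1 : ℚ).num * (((1 : ℚ).den.factorial : ℤ) / (1 : ℚ).den)) • c (1 : ℚ).den = a0
    have h1 : c 1 = a0 := by have := hca 1; simpa using this
    simp [Rat.num_one, Rat.den_one, Nat.factorial_one, h1]

/-- If the `n`-torsion subgroup `A[n]` is finite for every positive integer `n`, then the
maximal divisible subgroup `A_Div` coincides with the subgroup `A_div` of divisible elements. -/
theorem maxDivSub_eq_divElemSub (A : Type*) [AddCommGroup A]
    (hfin : ∀ n : ℕ, 0 < n → Finite {a : A // n • a = 0}) :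
    maxDivSub A = divElemSub A := by
  ext a
  constructor
  · rintro ⟨φ, rfl⟩
    simp only [divElemSub, AddSubgroup.mem_iInf, nSub, AddMonoidHom.mem_range]
    intro n hn
    refine ⟨φ (1 / n), ?_⟩
    have : (n : ℚ) * (1 / n) = 1 := by
      field_simp
    calc (n • AddMonoidHom.id A) (φ (1 / n)) = n • φ (1 / n) := by simp
      _ = φ (n • (1 / n : ℚ)) := (map_nsmul φ _ _).symm
      _ = φ 1 := by rw [nsmul_eq_mul, this]
  · intro ha
    have ha' : ∀ n : ℕ, 0 < n → ∃ b : A, n • b = a := by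
      intro n hn
      simp only [divElemSub, AddSubgroup.mem_iInf, nSub, AddMonoidHom.mem_range] at ha
      obtain ⟨b, hb⟩ := ha n hn
      exact ⟨b, by simpa using hb⟩
    obtain ⟨c, hca, hc⟩ := exists_div_seq hfin a ha'
    exact exists_hom_of_div_seq c hca hc
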